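/- In the free associative algebra ℂ⟨v_n : n ∈ ℤ⟩, consider the ideal J = ⟨v_m v_n − ω_{nm} v_n v_m : n > m⟩ with ω_{nm} ∈ ℂ*. If J is stable under the derivation ∂_{t_1} defined by ∂_{t_1}(v_n) = v_{n+1}v_n² − v_n² v_{n−1} (the first non-Abelian modified Volterra lift), then necessarily ω_{nm} = ω when n−m is odd and ω_{nm} = ω^{−1} when n−m is even, for a single nonzero parameter ω. Conversely, with these values J is ∂_{t_1}-stable. -/

import Mathlib

/-- The generator `v_n` of the free algebra `ℂ⟨v_n : n ∈ ℤ⟩`. -/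
noncomputable def vv (n : ℤ) : FreeAlgebra ℂ ℤ := FreeAlgebra.ι ℂ n

/-- The ideal `J = ⟨v_m v_n − ω_{nm} v_n v_m : n > m⟩` determined by the parameters `ωp`. -/
noncomputable def mVolIdeal (ωp : ℤ → ℤ → ℂ) : TwoSidedIdeal (FreeAlgebra ℂ ℤ) :=
  TwoSidedIdeal.span {x | ∃ n m : ℤ, m < n ∧ x = vv m * vv n - (ωp n m) • (vv n * vv m)}

namespace Stmt16

abbrev V : Type := (ℤ →₀ ℕ) →₀ ℂ

/-- weight of adding letter `k` on top of monomial `f` -/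
noncomputable def cc (ωp : ℤ → ℤ → ℂ) (k : ℤ) (f : ℤ →₀ ℕ) : ℂ :=
  f.prod fun j e => (if k < j then ωp j k else 1) ^ e

lemma cc_zero (ωp : ℤ → ℤ → ℂ) (k : ℤ) : cc ωp k 0 = 1 := Finsupp.prod_zero_index

lemma cc_single (ωp : ℤ → ℤ → ℂ) (k j : ℤ) :
    cc ωp k (Finsupp.single j 1) = (if k < j then ωp j k else 1) := by
  rw [cc, Finsupp.prod_single_index, pow_one]
  exact pow_zero _

lemma cc_add_single (ωp : ℤ → ℤ → ℂ) (k j : ℤ) (f : ℤ →₀ ℕ) :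
    cc ωp k (f + Finsupp.single j 1) = cc ωp k f * (if k < j then ωp j k else 1) := by
  rw [cc, Finsupp.prod_add_index' (fun a => pow_zero _) (fun a b₁ b₂ => pow_add _ _ _)]
  exact congrArg₂ (· * ·) rfl (cc_single ωp k j)

noncomputable def TT (ωp : ℤ → ℤ → ℂ) (S : Finset ℤ) (k : ℤ) : Module.End ℂ V :=
  if k ∈ S then
    Finsupp.lsum ℂ (fun f => cc ωp k f • Finsupp.lsingle (f + Finsupp.single k 1)) else 0

lemma TT_single (ωp : ℤ → ℤ → ℂ) {S : Finset ℤ} {k : ℤ} (hk : k ∈ S) (f : ℤ →₀ ℕ) (c : ℂ) :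
    TT ωp S k (Finsupp.single f c) =
      Finsupp.single (f + Finsupp.single k 1) (cc ωp k f * c) := by
  rw [TT, if_pos hk, Finsupp.lsum_single]
  simp [Finsupp.smul_single', mul_comm]

lemma TT_zero (ωp : ℤ → ℤ → ℂ) {S : Finset ℤ} {k : ℤ} (hk : k ∉ S) : TT ωp S k = 0 :=
  if_neg hk

lemma TT_comm (ωp : ℤ → ℤ → ℂ) (S : Finset ℤ) {a b : ℤ} (hab : a < b) :
    TT ωp S a * TT ωp S b = ωp b a • (TT ωp S b * TT ωp S a) := by
  by_cases ha : a ∈ S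
  · by_cases hb : b ∈ S
    · apply LinearMap.ext
      intro x
      induction x using Finsupp.induction_linear with
      | zero => simp
      | add f g hf hg => simp [map_add, hf, hg]
      | single f c =>
        rw [Module.End.mul_apply, LinearMap.smul_apply, Module.End.mul_apply,
          TT_single ωp hb, TT_single ωp ha, TT_single ωp ha, TT_single ωp hb,
          cc_add_single, cc_add_single, if_pos hab, if_neg (by omega : ¬ b < a)]
        rw [Finsupp.smul_single']
        congr 1
        · abel
        · ring
    · rw [TT_zero ωp hb, mul_zero, zero_mul, smul_zero]
  · rw [TT_zero ωp ha, zero_mul, mul_zero, smul_zero]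

noncomputable def ψ (ωp : ℤ → ℤ → ℂ) (S : Finset ℤ) : FreeAlgebra ℂ ℤ →ₐ[ℂ] Module.End ℂ V :=
  FreeAlgebra.lift ℂ (TT ωp S)

lemma ψ_vv (ωp : ℤ → ℤ → ℂ) (S : Finset ℤ) (k : ℤ) : ψ ωp S (vv k) = TT ωp S k :=
  FreeAlgebra.lift_ι_apply _ _

lemma ψ_vanish (ωp : ℤ → ℤ → ℂ) (S : Finset ℤ) {x : FreeAlgebra ℂ ℤ}
    (hx : x ∈ mVolIdeal ωp) : ψ ωp S x = 0 := by
  have := TwoSidedIdeal.mem_span_iff.mp hx (TwoSidedIdeal.ker (ψ ωp S)) ?_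
  · exact (TwoSidedIdeal.mem_ker _).mp this
  · rintro y ⟨n, m, hmn, rfl⟩
    rw [SetLike.mem_coe, TwoSidedIdeal.mem_ker, map_sub, map_smul, map_mul, map_mul]
    simp only [ψ_vv]
    rw [TT_comm ωp S hmn, sub_self]

end Stmt16

namespace Stmt16

lemma gen_mem' (ωp : ℤ → ℤ → ℂ) {m n : ℤ} (h : m < n) :
    vv m * vv n - ωp n m • (vv n * vv m) ∈ mVolIdeal ωp :=
  TwoSidedIdeal.subset_span ⟨n, m, h, rfl⟩

lemma smul_mem' (ωp : ℤ → ℤ → ℂ) (c : ℂ) {x : FreeAlgebra ℂ ℤ} (hx : x ∈ mVolIdeal ωp) :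
    c • x ∈ mVolIdeal ωp := by
  rw [Algebra.smul_def]
  exact TwoSidedIdeal.mul_mem_left _ _ _ hx

lemma flip_ite {ω : ℂ} (hω : ω ≠ 0) (k : ℤ) :
    (if Odd (k+1) then ω else ω⁻¹) = (if Odd k then ω else ω⁻¹)⁻¹ := by
  rcases Int.even_or_odd k with he | ho
  · rw [if_pos he.add_one, if_neg (by simpa [Int.not_odd_iff_even] using he), inv_inv]
  · rw [if_neg (by simpa [Int.not_odd_iff_even] using ho.add_one), if_pos ho]

section Extraction

variable (ωp : ℤ → ℤ → ℂ) (hωp : ∀ n m : ℤ, m < n → ωp n m ≠ 0)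
    (D : FreeAlgebra ℂ ℤ →ₗ[ℂ] FreeAlgebra ℂ ℤ)
    (hD : ∀ x y, D (x * y) = D x * y + x * D y)
    (hDgen : ∀ n : ℤ, D (vv n) = vv (n + 1) * (vv n) ^ 2 - (vv n) ^ 2 * vv (n - 1))
    (Hst : ∀ x ∈ mVolIdeal ωp, D x ∈ mVolIdeal ωp)

include hωp hD hDgen Hst

lemma extGen {m n : ℤ} (h : m + 2 ≤ n) : ωp (n+1) m = (ωp n m)⁻¹ := by
  set S : Finset ℤ := {m, n, n+1} with hS
  have hm : m ∈ S := by simp [hS]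
  have hn : n ∈ S := by simp [hS]
  have hn1 : n + 1 ∈ S := by simp [hS]
  have zm1 : TT ωp S (m-1) = 0 := TT_zero ωp (by simp [hS]; omega)
  have zm2 : TT ωp S (m+1) = 0 := TT_zero ωp (by simp [hS]; omega)
  have zn1 : TT ωp S (n-1) = 0 := TT_zero ωp (by simp [hS]; omega)
  have h0 : ψ ωp S (D (vv m * vv n - ωp n m • (vv n * vv m))) = 0 :=
    ψ_vanish _ _ (Hst _ (gen_mem' ωp (by omega)))
  rw [map_sub, map_smul, hD, hD, hDgen, hDgen] at h0
  have h1 := DFunLike.congr_fun h0 (Finsupp.single 0 1)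
  simp only [map_sub, map_add, map_smul, map_mul, map_pow, ψ_vv, pow_two] at h1
  rw [zm1, zn1] at h1
  simp only [mul_zero, zero_mul, sub_zero, zero_sub, LinearMap.zero_apply, LinearMap.sub_apply,
    LinearMap.add_apply, LinearMap.smul_apply, Module.End.mul_apply, LinearMap.neg_apply,
    map_zero, map_neg, smul_zero, neg_zero, add_zero, zero_add] at h1
  simp only [zm2, LinearMap.zero_apply, map_zero, smul_zero, zero_add, add_zero, zero_sub,
    sub_zero] at h1
  simp only [TT_single ωp hm, TT_single ωp hn, TT_single ωp hn1, cc_zero, cc_add_single,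
    one_mul, mul_one] at h1
  rw [if_pos (by omega : m < n), if_pos (by omega : m < n + 1),
    if_neg (by omega : ¬ n < n), if_neg (by omega : ¬ n + 1 < n),
    if_neg (by omega : ¬ n < m), if_neg (by omega : ¬ n + 1 < m)] at h1
  simp only [mul_one, one_mul] at h1
  have hF : ((((0 : ℤ →₀ ℕ) + Finsupp.single m 1) + Finsupp.single n 1) + Finsupp.single n 1)
      + Finsupp.single (n+1) 1
      = ((((0 : ℤ →₀ ℕ) + Finsupp.single n 1) + Finsupp.single n 1) + Finsupp.single (n+1) 1)
      + Finsupp.single m 1 := by abel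
  rw [hF, Finsupp.smul_single', ← Finsupp.single_sub, Finsupp.single_eq_zero,
    sub_eq_zero] at h1
  have hq := hωp n m (by omega)
  have h3 : ωp n m * ωp (n + 1) m = 1 := by
    apply mul_left_cancel₀ hq
    linear_combination h1
  field_simp
  linear_combination h3

lemma extAdj (m : ℤ) : ωp (m+2) m = (ωp (m+1) m)⁻¹ := by
  set S : Finset ℤ := {m, m+1, m+2} with hS
  have hm : m ∈ S := by simp [hS]
  have hn : m + 1 ∈ S := by simp [hS]
  have hn1 : m + 2 ∈ S := by simp [hS]
  have zm1 : TT ωp S (m-1) = 0 := TT_zero ωp (by simp [hS]; omega)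
  have h0 : ψ ωp S (D (vv m * vv (m+1) - ωp (m+1) m • (vv (m+1) * vv m))) = 0 :=
    ψ_vanish _ _ (Hst _ (gen_mem' ωp (by omega)))
  rw [map_sub, map_smul, hD, hD, hDgen, hDgen,
    show (m+1+1 : ℤ) = m+2 from by ring, show (m+1-1 : ℤ) = m from by ring] at h0
  have h1 := DFunLike.congr_fun h0 (Finsupp.single 0 1)
  simp only [map_sub, map_add, map_smul, map_mul, map_pow, ψ_vv, pow_two] at h1
  rw [zm1] at h1
  simp only [mul_zero, zero_mul, sub_zero, zero_sub, LinearMap.zero_apply, LinearMap.sub_apply,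
    LinearMap.add_apply, LinearMap.smul_apply, Module.End.mul_apply, LinearMap.neg_apply,
    map_zero, map_neg, smul_zero, neg_zero, add_zero, zero_add] at h1
  simp only [TT_single ωp hm, TT_single ωp hn, TT_single ωp hn1, cc_zero, cc_add_single,
    map_sub, map_add, map_smul, one_mul, mul_one,
    if_pos (show m < m + 1 by omega), if_pos (show m < m + 2 by omega),
    if_neg (show ¬ m < m by omega), if_neg (show ¬ m + 1 < m by omega),
    if_neg (show ¬ m + 1 < m + 1 by omega), if_neg (show ¬ m + 2 < m by omega),
    if_neg (show ¬ m + 2 < m + 1 by omega), if_neg (show ¬ m + 2 < m + 2 by omega)] at h1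
  clear h0 zm1 Hst hD hDgen
  simp only [zero_add] at h1
  set f₀ : ℤ →₀ ℕ := ((Finsupp.single (m+1) (1:ℕ) + Finsupp.single (m+1) 1)
      + Finsupp.single (m+2) 1) + Finsupp.single m 1 with hf₀
  have hI4 : ((Finsupp.single m (1:ℕ) + Finsupp.single (m+1) 1)
      + Finsupp.single (m+1) 1) + Finsupp.single (m+2) 1 = f₀ := by rw [hf₀]; abel
  have hI1 : ((Finsupp.single (m+1) (1:ℕ) + Finsupp.single m 1)
      + Finsupp.single m 1) + Finsupp.single (m+1) 1 ≠ f₀ := by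
    intro hh
    have := DFunLike.congr_fun hh (m+2)
    simp [hf₀, Finsupp.single_apply] at this
  have hI3 : ((Finsupp.single m (1:ℕ) + Finsupp.single (m+1) 1)
      + Finsupp.single (m+1) 1) + Finsupp.single m 1 ≠ f₀ := by
    intro hh
    have := DFunLike.congr_fun hh (m+2)
    simp [hf₀, Finsupp.single_apply] at this
  have hI5 : ((Finsupp.single m (1:ℕ) + Finsupp.single m 1)
      + Finsupp.single (m+1) 1) + Finsupp.single (m+1) 1 ≠ f₀ := by
    intro hh
    have := DFunLike.congr_fun hh (m+2)
    simp [hf₀, Finsupp.single_apply] at this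
  rw [hI4] at h1
  have h2 := DFunLike.congr_fun h1 f₀
  simp only [Finsupp.sub_apply, Finsupp.add_apply, Finsupp.smul_apply, Finsupp.coe_zero,
    Pi.zero_apply, Finsupp.single_apply, if_pos rfl, if_neg hI1, if_neg hI3, if_neg hI5,
    smul_eq_mul, mul_one, mul_zero, sub_zero, zero_add, add_zero, zero_sub, sub_self,
    if_true] at h2
  have hq := hωp (m+1) m (by omega)
  have h3 : ωp (m + 1) m * ωp (m + 2) m = 1 := by
    apply mul_left_cancel₀ hq
    linear_combination h2
  field_simp
  linear_combination h3

lemma extA (m : ℤ) : ωp (m+2) (m+1) = (ωp (m+2) m)⁻¹ := by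
  set S : Finset ℤ := {m, m+1, m+2} with hS
  have hm : m ∈ S := by simp [hS]
  have hn : m + 1 ∈ S := by simp [hS]
  have hn1 : m + 2 ∈ S := by simp [hS]
  have zm1 : TT ωp S (m-1) = 0 := TT_zero ωp (by simp [hS]; omega)
  have zm3 : TT ωp S (m+3) = 0 := TT_zero ωp (by first | (simp [hS]; omega) | simp [hS])
  have h0 : ψ ωp S (D (vv m * vv (m+2) - ωp (m+2) m • (vv (m+2) * vv m))) = 0 :=
    ψ_vanish _ _ (Hst _ (gen_mem' ωp (by omega)))
  rw [map_sub, map_smul, hD, hD, hDgen, hDgen,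
    show (m+2+1 : ℤ) = m+3 from by ring, show (m+2-1 : ℤ) = m+1 from by ring] at h0
  have h1 := DFunLike.congr_fun h0 (Finsupp.single 0 1)
  simp only [map_sub, map_add, map_smul, map_mul, map_pow, ψ_vv, pow_two] at h1
  rw [zm1, zm3] at h1
  simp only [mul_zero, zero_mul, sub_zero, zero_sub, LinearMap.zero_apply, LinearMap.sub_apply,
    LinearMap.add_apply, LinearMap.smul_apply, Module.End.mul_apply, LinearMap.neg_apply,
    map_zero, map_neg, smul_zero, neg_zero, add_zero, zero_add] at h1
  simp only [TT_single ωp hm, TT_single ωp hn, TT_single ωp hn1, cc_zero, cc_add_single,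
    map_sub, map_add, map_smul, one_mul, mul_one,
    if_pos (show m < m + 1 by omega), if_pos (show m < m + 2 by omega),
    if_pos (show m + 1 < m + 2 by omega),
    if_neg (show ¬ m < m by omega), if_neg (show ¬ m + 1 < m by omega),
    if_neg (show ¬ m + 1 < m + 1 by omega), if_neg (show ¬ m + 2 < m by omega),
    if_neg (show ¬ m + 2 < m + 1 by omega), if_neg (show ¬ m + 2 < m + 2 by omega)] at h1
  simp only [zero_add] at h1
  clear h0 zm1 zm3 Hst hD hDgen
  set f₀ : ℤ →₀ ℕ := ((Finsupp.single (m+2) (1:ℕ) + Finsupp.single m 1)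
      + Finsupp.single m 1) + Finsupp.single (m+1) 1 with hf₀
  have hI3 : ((Finsupp.single m (1:ℕ) + Finsupp.single m 1)
      + Finsupp.single (m+1) 1) + Finsupp.single (m+2) 1 = f₀ := by rw [hf₀]; abel
  have hI2 : ((Finsupp.single (m+1) (1:ℕ) + Finsupp.single (m+2) 1)
      + Finsupp.single (m+2) 1) + Finsupp.single m 1 ≠ f₀ := by
    intro hh
    have := DFunLike.congr_fun hh m
    simp [hf₀, Finsupp.single_apply] at this
  have hI4' : ((Finsupp.single m (1:ℕ) + Finsupp.single (m+1) 1)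
      + Finsupp.single (m+2) 1) + Finsupp.single (m+2) 1 ≠ f₀ := by
    intro hh
    have := DFunLike.congr_fun hh m
    simp [hf₀, Finsupp.single_apply] at this
  rw [hI3] at h1
  have h2 := DFunLike.congr_fun h1 f₀
  simp only [Finsupp.sub_apply, Finsupp.add_apply, Finsupp.neg_apply, Finsupp.smul_apply,
    Finsupp.coe_zero, Pi.zero_apply, Finsupp.single_apply, if_pos rfl, if_neg hI2,
    if_neg hI4', smul_eq_mul, mul_one, mul_zero, sub_zero, zero_add, add_zero, zero_sub,
    neg_zero, sub_self, if_true] at h2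
  have hq := hωp (m+2) m (by omega)
  have h3 : ωp (m + 2) m * ωp (m + 2) (m+1) = 1 := by
    apply mul_left_cancel₀ hq
    linear_combination h2
  field_simp
  linear_combination h3

end Extraction

lemma only_if (ωp : ℤ → ℤ → ℂ) (hωp : ∀ n m : ℤ, m < n → ωp n m ≠ 0)
    (E2 : ∀ m n : ℤ, m < n → ωp (n+1) m = (ωp n m)⁻¹)
    (E3 : ∀ m : ℤ, ωp (m+2) (m+1) = (ωp (m+2) m)⁻¹) :
    ∀ n m : ℤ, m < n → ωp n m = if Odd (n - m) then ωp 1 0 else (ωp 1 0)⁻¹ := by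
  have hω : ωp 1 0 ≠ 0 := hωp 1 0 (by omega)
  have step : ∀ m : ℤ, ωp (m+2) (m+1) = ωp (m+1) m := by
    intro m
    rw [E3 m, show (m+2 : ℤ) = (m+1)+1 from by ring, E2 m (m+1) (by omega), inv_inv]
  have adj : ∀ m : ℤ, ωp (m+1) m = ωp 1 0 := by
    intro m
    induction m using Int.induction_on with
    | zero => norm_num
    | succ i ih =>
      rw [show ((i:ℤ)+1+1) = (i:ℤ)+2 from by ring, step]
      exact ih
    | pred i ih =>
      rw [← step (-(i:ℤ)-1), show (-(i:ℤ)-1+2) = (-(i:ℤ))+1 from by ring,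
        show (-(i:ℤ)-1+1) = (-(i:ℤ)) from by ring]
      exact ih
  intro n m hmn
  have main : ∀ k : ℤ, m + 1 ≤ k → ωp k m = if Odd (k - m) then ωp 1 0 else (ωp 1 0)⁻¹ := by
    refine Int.le_induction ?_ ?_
    · rw [show m+1-m = (1:ℤ) from by ring, if_pos ⟨0, by ring⟩]
      exact adj m
    · intro k hk ih
      rw [E2 m k (by omega), ih, show (k+1-m : ℤ) = (k-m)+1 from by ring, Stmt16.flip_ite hω]
  exact main n hmn

section IfDir

variable (ωp : ℤ → ℤ → ℂ)
    (D : FreeAlgebra ℂ ℤ →ₗ[ℂ] FreeAlgebra ℂ ℤ)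
    (hD : ∀ x y, D (x * y) = D x * y + x * D y)
    (hDgen : ∀ n : ℤ, D (vv n) = vv (n + 1) * (vv n) ^ 2 - (vv n) ^ 2 * vv (n - 1))

include hD hDgen

lemma ifGen {m n : ℤ} (h : m + 2 ≤ n)
    (hq : ωp n m ≠ 0)
    (h1 : ωp n (m+1) = (ωp n m)⁻¹)
    (h2 : ωp n (m-1) = (ωp n m)⁻¹)
    (h3 : ωp (n+1) m = (ωp n m)⁻¹)
    (h4 : ωp (n-1) m = (ωp n m)⁻¹) :
    D (vv m * vv n - ωp n m • (vv n * vv m)) ∈ mVolIdeal ωp := by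
  set q : ℂ := ωp n m with hqdef
  set Gmn := vv m * vv n - q • (vv n * vv m) with hGmn
  set G1 := vv (m+1) * vv n - ωp n (m+1) • (vv n * vv (m+1)) with hG1
  set G2 := vv (m-1) * vv n - ωp n (m-1) • (vv n * vv (m-1)) with hG2
  set G3 := vv m * vv (n+1) - ωp (n+1) m • (vv (n+1) * vv m) with hG3
  set G4 := vv m * vv (n-1) - ωp (n-1) m • (vv (n-1) * vv m) with hG4
  have key : D (vv m * vv n - q • (vv n * vv m)) =
      vv (m+1) * vv m * Gmn + q • (vv (m+1) * (Gmn * vv m)) + q^2 • (G1 * (vv m * vv m))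
      - (vv m * vv m) * G2 - q⁻¹ • (vv m * (Gmn * vv (m-1))) - Gmn * (vv m * vv (m-1))
      + G3 * (vv n * vv n) + q⁻¹ • (vv (n+1) * (Gmn * vv n)) + vv (n+1) * vv n * Gmn
      - Gmn * (vv n * vv (n-1)) - q • (vv n * (Gmn * vv (n-1))) - q^2 • ((vv n * vv n) * G4) := by
    rw [map_sub, map_smul, hD, hD, hDgen, hDgen, hGmn, hG1, hG2, hG3, hG4, h1, h2, h3, h4]
    simp only [pow_two, mul_assoc, sub_mul, mul_sub, smul_mul_assoc, mul_smul_comm, smul_sub,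
      smul_smul, smul_add, add_mul, mul_add]
    match_scalars <;> field_simp <;> ring
  rw [key]
  refine TwoSidedIdeal.sub_mem _ (TwoSidedIdeal.sub_mem _ (TwoSidedIdeal.sub_mem _
    (TwoSidedIdeal.add_mem _ (TwoSidedIdeal.add_mem _ (TwoSidedIdeal.add_mem _
    (TwoSidedIdeal.sub_mem _ (TwoSidedIdeal.sub_mem _ (TwoSidedIdeal.sub_mem _
    (TwoSidedIdeal.add_mem _ (TwoSidedIdeal.add_mem _ ?_ ?_) ?_) ?_) ?_) ?_) ?_) ?_) ?_) ?_) ?_) ?_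
  · exact TwoSidedIdeal.mul_mem_left _ _ _ (gen_mem' ωp (by omega))
  · exact smul_mem' ωp _ (TwoSidedIdeal.mul_mem_left _ _ _
      (TwoSidedIdeal.mul_mem_right _ _ _ (gen_mem' ωp (by omega))))
  · exact smul_mem' ωp _ (TwoSidedIdeal.mul_mem_right _ _ _ (gen_mem' ωp (by omega)))
  · exact TwoSidedIdeal.mul_mem_left _ _ _ (gen_mem' ωp (by omega))
  · exact smul_mem' ωp _ (TwoSidedIdeal.mul_mem_left _ _ _
      (TwoSidedIdeal.mul_mem_right _ _ _ (gen_mem' ωp (by omega))))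
  · exact TwoSidedIdeal.mul_mem_right _ _ _ (gen_mem' ωp (by omega))
  · exact TwoSidedIdeal.mul_mem_right _ _ _ (gen_mem' ωp (by omega))
  · exact smul_mem' ωp _ (TwoSidedIdeal.mul_mem_left _ _ _
      (TwoSidedIdeal.mul_mem_right _ _ _ (gen_mem' ωp (by omega))))
  · exact TwoSidedIdeal.mul_mem_left _ _ _ (gen_mem' ωp (by omega))
  · exact TwoSidedIdeal.mul_mem_right _ _ _ (gen_mem' ωp (by omega))
  · exact smul_mem' ωp _ (TwoSidedIdeal.mul_mem_left _ _ _
      (TwoSidedIdeal.mul_mem_right _ _ _ (gen_mem' ωp (by omega))))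
  · exact smul_mem' ωp _ (TwoSidedIdeal.mul_mem_left _ _ _ (gen_mem' ωp (by omega)))

lemma ifAdj (m : ℤ)
    (hq : ωp (m+1) m ≠ 0)
    (h2 : ωp (m+1) (m-1) = (ωp (m+1) m)⁻¹)
    (h3 : ωp (m+2) m = (ωp (m+1) m)⁻¹) :
    D (vv m * vv (m+1) - ωp (m+1) m • (vv (m+1) * vv m)) ∈ mVolIdeal ωp := by
  set q : ℂ := ωp (m+1) m with hqdef
  set Gmn := vv m * vv (m+1) - q • (vv (m+1) * vv m) with hGmn
  set G2 := vv (m-1) * vv (m+1) - ωp (m+1) (m-1) • (vv (m+1) * vv (m-1)) with hG2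
  set G3 := vv m * vv (m+2) - ωp (m+2) m • (vv (m+2) * vv m) with hG3
  have key : D (vv m * vv (m+1) - q • (vv (m+1) * vv m)) =
      vv (m+1) * vv m * Gmn - Gmn * (vv (m+1) * vv m)
      - (vv m * vv m) * G2 - q⁻¹ • (vv m * (Gmn * vv (m-1))) - Gmn * (vv m * vv (m-1))
      + G3 * (vv (m+1) * vv (m+1)) + q⁻¹ • (vv (m+2) * (Gmn * vv (m+1)))
      + vv (m+2) * vv (m+1) * Gmn := by
    rw [map_sub, map_smul, hD, hD, hDgen, hDgen,
      show (m+1+1 : ℤ) = m+2 from by ring, show (m+1-1 : ℤ) = m from by ring,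
      hGmn, hG2, hG3, h2, h3]
    simp only [pow_two, mul_assoc, sub_mul, mul_sub, smul_mul_assoc, mul_smul_comm, smul_sub,
      smul_smul, smul_add, add_mul, mul_add]
    match_scalars <;> field_simp <;> ring
  rw [key]
  refine TwoSidedIdeal.add_mem _ (TwoSidedIdeal.add_mem _ (TwoSidedIdeal.add_mem _
    (TwoSidedIdeal.sub_mem _ (TwoSidedIdeal.sub_mem _ (TwoSidedIdeal.sub_mem _
    (TwoSidedIdeal.sub_mem _ ?_ ?_) ?_) ?_) ?_) ?_) ?_) ?_
  · exact TwoSidedIdeal.mul_mem_left _ _ _ (gen_mem' ωp (by omega))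
  · exact TwoSidedIdeal.mul_mem_right _ _ _ (gen_mem' ωp (by omega))
  · exact TwoSidedIdeal.mul_mem_left _ _ _ (gen_mem' ωp (by omega))
  · exact smul_mem' ωp _ (TwoSidedIdeal.mul_mem_left _ _ _
      (TwoSidedIdeal.mul_mem_right _ _ _ (gen_mem' ωp (by omega))))
  · exact TwoSidedIdeal.mul_mem_right _ _ _ (gen_mem' ωp (by omega))
  · exact TwoSidedIdeal.mul_mem_right _ _ _ (gen_mem' ωp (by omega))
  · exact smul_mem' ωp _ (TwoSidedIdeal.mul_mem_left _ _ _
      (TwoSidedIdeal.mul_mem_right _ _ _ (gen_mem' ωp (by omega))))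
  · exact TwoSidedIdeal.mul_mem_left _ _ _ (gen_mem' ωp (by omega))

end IfDir

end Stmt16


/-- The ideal `J` (with all `ω_{nm} ≠ 0`) is stable under the derivation `∂_{t_1}` of the
first non-Abelian modified Volterra lift, `∂_{t_1}(v_n) = v_{n+1} v_n² − v_n² v_{n−1}`,
if and only if `ω_{nm} = ω` for `n−m` odd and `ω_{nm} = ω⁻¹` for `n−m` even, for a single
nonzero parameter `ω`. -/
theorem stmt16 (ωp : ℤ → ℤ → ℂ) (hωp : ∀ n m : ℤ, m < n → ωp n m ≠ 0)
    (D : FreeAlgebra ℂ ℤ →ₗ[ℂ] FreeAlgebra ℂ ℤ)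
    (hD : ∀ x y, D (x * y) = D x * y + x * D y)
    (hDgen : ∀ n : ℤ, D (vv n) = vv (n + 1) * (vv n) ^ 2 - (vv n) ^ 2 * vv (n - 1)) :
    (∀ x ∈ mVolIdeal ωp, D x ∈ mVolIdeal ωp) ↔
      ∃ ω : ℂ, ω ≠ 0 ∧ ∀ n m : ℤ, m < n →
        ωp n m = if Odd (n - m) then ω else ω⁻¹ := by
  constructor
  · intro Hst
    refine ⟨ωp 1 0, hωp 1 0 (by omega), ?_⟩
    refine Stmt16.only_if ωp hωp ?_ ?_
    · intro m n hmn
      rcases eq_or_lt_of_le (show m + 1 ≤ n from hmn) with he | hl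
      · rw [← he, show (m+1+1 : ℤ) = m+2 from by ring]
        exact Stmt16.extAdj ωp hωp D hD hDgen Hst m
      · exact Stmt16.extGen ωp hωp D hD hDgen Hst (by omega)
    · exact Stmt16.extA ωp hωp D hD hDgen Hst
  · rintro ⟨ω, hω, hval⟩ x hx
    set C : Set (FreeAlgebra ℂ ℤ) := {y | y ∈ mVolIdeal ωp ∧ D y ∈ mVolIdeal ωp} with hC
    have c0 : (0 : FreeAlgebra ℂ ℤ) ∈ C :=
      ⟨TwoSidedIdeal.zero_mem _, by rw [map_zero]; exact TwoSidedIdeal.zero_mem _⟩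
    have cadd : ∀ {a b : FreeAlgebra ℂ ℤ}, a ∈ C → b ∈ C → a + b ∈ C := by
      intro a b ha hb
      exact ⟨TwoSidedIdeal.add_mem _ ha.1 hb.1,
        by rw [map_add]; exact TwoSidedIdeal.add_mem _ ha.2 hb.2⟩
    have cneg : ∀ {a : FreeAlgebra ℂ ℤ}, a ∈ C → -a ∈ C := by
      intro a ha
      exact ⟨TwoSidedIdeal.neg_mem _ ha.1,
        by rw [map_neg]; exact TwoSidedIdeal.neg_mem _ ha.2⟩
    have cl : ∀ {a b : FreeAlgebra ℂ ℤ}, b ∈ C → a * b ∈ C := by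
      intro a b hb
      refine ⟨TwoSidedIdeal.mul_mem_left _ _ _ hb.1, ?_⟩
      rw [hD]
      exact TwoSidedIdeal.add_mem _ (TwoSidedIdeal.mul_mem_left _ _ _ hb.1)
        (TwoSidedIdeal.mul_mem_left _ _ _ hb.2)
    have cr : ∀ {a b : FreeAlgebra ℂ ℤ}, a ∈ C → a * b ∈ C := by
      intro a b ha
      refine ⟨TwoSidedIdeal.mul_mem_right _ _ _ ha.1, ?_⟩
      rw [hD]
      exact TwoSidedIdeal.add_mem _ (TwoSidedIdeal.mul_mem_right _ _ _ ha.2)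
        (TwoSidedIdeal.mul_mem_right _ _ _ ha.1)
    have hsub : {y : FreeAlgebra ℂ ℤ |
        ∃ n m : ℤ, m < n ∧ y = vv m * vv n - (ωp n m) • (vv n * vv m)} ⊆
        (TwoSidedIdeal.mk' C c0 cadd cneg cl cr : Set (FreeAlgebra ℂ ℤ)) := by
      rintro z ⟨n, m, hmn, rfl⟩
      rw [SetLike.mem_coe, TwoSidedIdeal.mem_mk']
      refine ⟨Stmt16.gen_mem' ωp hmn, ?_⟩
      rcases eq_or_lt_of_le (show m + 1 ≤ n from hmn) with he | hl
      · have h2 : ωp (m+1) (m-1) = (ωp (m+1) m)⁻¹ := by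
          rw [hval (m+1) (m-1) (by omega), hval (m+1) m (by omega),
            show (m+1-(m-1) : ℤ) = (m+1-m)+1 from by ring, Stmt16.flip_ite hω]
        have h3 : ωp (m+2) m = (ωp (m+1) m)⁻¹ := by
          rw [hval (m+2) m (by omega), hval (m+1) m (by omega),
            show (m+2-m : ℤ) = (m+1-m)+1 from by ring, Stmt16.flip_ite hω]
        rw [← he]
        exact Stmt16.ifAdj ωp D hD hDgen m (hωp (m+1) m (by omega)) h2 h3
      · have hq : ωp n m ≠ 0 := hωp n m (by omega)
        have h1 : ωp n (m+1) = (ωp n m)⁻¹ := by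
          rw [hval n (m+1) (by omega), hval n m (by omega),
            show (n-m : ℤ) = (n-(m+1))+1 from by ring, Stmt16.flip_ite hω, inv_inv]
        have h2 : ωp n (m-1) = (ωp n m)⁻¹ := by
          rw [hval n (m-1) (by omega), hval n m (by omega),
            show (n-(m-1) : ℤ) = (n-m)+1 from by ring, Stmt16.flip_ite hω]
        have h3 : ωp (n+1) m = (ωp n m)⁻¹ := by
          rw [hval (n+1) m (by omega), hval n m (by omega),
            show (n+1-m : ℤ) = (n-m)+1 from by ring, Stmt16.flip_ite hω]
        have h4 : ωp (n-1) m = (ωp n m)⁻¹ := by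
          rw [hval (n-1) m (by omega), hval n m (by omega),
            show (n-m : ℤ) = (n-1-m)+1 from by ring, Stmt16.flip_ite hω, inv_inv]
        exact Stmt16.ifGen ωp D hD hDgen (by omega) hq h1 h2 h3 h4
    have hmem := TwoSidedIdeal.mem_span_iff.mp hx _ hsub
    rw [TwoSidedIdeal.mem_mk'] at hmem
    exact hmem.2
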